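/- Let M be a topological manifold (a Hausdorff topological space in which every point has an open neighborhood homeomorphic to an open subset of ℝ^d for some fixed d). If there exists a topological embedding of ω₁ (with its order topology) into M, then M is not contractible. -/

import Mathlib

noncomputable section
open Set

/-- The first uncountable ordinal `ω₁`. -/
def Omega1 : Ordinal := Ordinal.omega 1

/-- The closed long ray `𝖱`: `ω₁ × [0,1)` with the lexicographic order. -/
def LongRay : Type 1 := {o : Ordinal // o < Omega1} ×ₗ (Set.Ico (0:ℝ) 1)

instance : LinearOrder LongRay :=
  inferInstanceAs (LinearOrder ({o : Ordinal // o < Omega1} ×ₗ (Set.Ico (0:ℝ) 1)))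

/-- `𝖱` carries the order topology. -/
instance : TopologicalSpace LongRay := Preorder.topology LongRay
instance : OrderTopology LongRay := ⟨rfl⟩

lemma omega1_pos : (0 : Ordinal) < Omega1 := Ordinal.omega_pos 1

/-- The point `0 = (0,0)` of the long ray. -/
def rayZero : LongRay := toLex (⟨0, omega1_pos⟩, ⟨0, by simp⟩)

/-- Identification of the countable ordinal `o` with the point `(o,0)` of the long ray
(junk value for `o ≥ ω₁`). -/
def ordR (o : Ordinal) : LongRay :=
  if h : o < Omega1 then toLex (⟨o, h⟩, ⟨0, by simp⟩) else rayZero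

/-- The `I`-diagonal at height `c` (only the values of `c` off `I` are relevant). -/
def Delta (n : ℕ) (I : Finset (Fin n)) (c : Fin n → LongRay) : Set (Fin n → LongRay) :=
  {x | (∀ i ∈ I, ∀ i' ∈ I, x i = x i') ∧ ∀ j ∉ I, x j = c j}

/-- `f` is `I`-cofinal if `f` restricted to `Δ_I = Δ_I(0)` is unbounded. -/
def ICofinal (n : ℕ) (f : (Fin n → LongRay) → LongRay) (I : Finset (Fin n)) : Prop :=
  ¬ BddAbove (f '' Delta n I (fun _ => rayZero))

/-- The cofinality class `𝔠(f) = {I : f is I-cofinal}`. -/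
def cofClass (n : ℕ) (f : (Fin n → LongRay) → LongRay) : Set (Finset (Fin n)) :=
  {I | ICofinal n f I}

/-- `M_I(c) = {x : x_i ≥ c for all i ∈ I}`. -/
def MSet (n : ℕ) (I : Finset (Fin n)) (c : LongRay) : Set (Fin n → LongRay) :=
  {x | ∀ i ∈ I, c ≤ x i}

/-- `E_I(b,d) = {x ∈ M_I(d) : x_j = b_j for all j ∉ I}`. -/
def ESet (n : ℕ) (I : Finset (Fin n)) (b : Fin n → LongRay) (d : LongRay) :
    Set (Fin n → LongRay) :=
  {x | (∀ i ∈ I, d ≤ x i) ∧ ∀ j ∉ I, x j = b j}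

/-- The space `ω₁` of countable ordinals with its order topology. -/
def CountableOrdinals : Type 1 := {o : Ordinal // o < Omega1}

instance : LinearOrder CountableOrdinals :=
  inferInstanceAs (LinearOrder {o : Ordinal // o < Omega1})

instance : TopologicalSpace CountableOrdinals := Preorder.topology CountableOrdinals
instance : OrderTopology CountableOrdinals := ⟨rfl⟩

/-! ### Auxiliary material for the main theorem -/

section Aux

open Filter Topology

instance : Nonempty CountableOrdinals := ⟨⟨0, omega1_pos⟩⟩

lemma co_le_iff {a b : CountableOrdinals} : a ≤ b ↔ a.1 ≤ b.1 := Iff.rfl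

lemma co_lt_iff {a b : CountableOrdinals} : a < b ↔ a.1 < b.1 := Iff.rfl

/-- Successor in the countable ordinals. -/
def csucc (a : CountableOrdinals) : CountableOrdinals :=
  ⟨Order.succ a.1, (Cardinal.isSuccLimit_omega 1).succ_lt a.2⟩

lemma lt_csucc (a : CountableOrdinals) : a < csucc a := by
  rw [co_lt_iff]
  exact Order.lt_succ a.1

/-- Every countable sequence in `ω₁` has a least upper bound. -/
lemma exists_isLUB_of_seq (g : ℕ → CountableOrdinals) :
    ∃ a : CountableOrdinals, IsLUB (Set.range g) a ∧ ∀ n, g n ≤ a := by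
  have h : (⨆ n, (g n).1) < Omega1 := by
    exact Ordinal.iSup_lt_omega_one (f := fun n : ℕ => (g n).1) (fun n => (g n).2)
  refine ⟨⟨_, h⟩, ⟨?_, ?_⟩, fun n => ?_⟩
  · rintro x ⟨n, rfl⟩
    exact (co_le_iff).mpr (Ordinal.le_iSup (fun n => (g n).1) n)
  · intro b hb
    refine (co_le_iff).mpr ?_
    exact Ordinal.iSup_le (fun n => (co_le_iff).mp (hb ⟨n, rfl⟩))
  · exact (co_le_iff).mpr (Ordinal.le_iSup (fun n => (g n).1) n)

/-- A continuous map from `ω₁` to a metric space is eventually constant. -/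
lemma eventuallyConstant {E : Type*} [MetricSpace E] (f : CountableOrdinals → E)
    (hf : Continuous f) : ∃ a, ∀ b, a ≤ b → f b = f a := by
  have step : ∀ ε : ℝ, 0 < ε → ∃ a, ∀ b, a ≤ b → dist (f b) (f a) < ε := by
    intro ε hε
    by_contra hcon
    push_neg at hcon
    choose F hF1 hF2 using hcon
    obtain ⟨a0⟩ : Nonempty CountableOrdinals := inferInstance
    let g : ℕ → CountableOrdinals := fun n => Nat.rec a0 (fun _ x => csucc (F x)) n
    have hgs : ∀ n, g (n + 1) = csucc (F (g n)) := fun n => rfl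
    have hmono : Monotone g := monotone_nat_of_le_succ (fun n => by
      rw [hgs]; exact le_trans (hF1 (g n)) (lt_csucc _).le)
    obtain ⟨a, ha, _⟩ := exists_isLUB_of_seq g
    have hga : Tendsto g atTop (𝓝 a) := tendsto_atTop_isLUB hmono ha
    have hFa : Tendsto (fun n => F (g n)) atTop (𝓝 a) := by
      refine tendsto_of_tendsto_of_tendsto_of_le_of_le hga
        (hga.comp (tendsto_add_atTop_nat 1)) (fun n => hF1 (g n)) (fun n => ?_)
      show F (g n) ≤ g (n + 1)
      rw [hgs]
      exact (lt_csucc _).le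
    have h1 : Tendsto (fun n => dist (f (F (g n))) (f (g n))) atTop
        (𝓝 (dist (f a) (f a))) :=
      ((hf.tendsto a).comp hFa).dist ((hf.tendsto a).comp hga)
    rw [dist_self] at h1
    have h2 : ε ≤ 0 := ge_of_tendsto h1 (Filter.Eventually.of_forall fun n => hF2 (g n))
    linarith
  choose A hA using fun n : ℕ => step (1 / (n + 1)) (by positivity)
  obtain ⟨a, _, hub⟩ := exists_isLUB_of_seq A
  refine ⟨a, fun b hb => ?_⟩
  have key : ∀ n : ℕ, dist (f b) (f a) < 2 / (n + 1) := by
    intro n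
    have h1 := hA n b (le_trans (hub n) hb)
    have h2 := hA n a (hub n)
    calc dist (f b) (f a) ≤ dist (f b) (f (A n)) + dist (f a) (f (A n)) :=
          dist_triangle_right _ _ _
      _ < 1 / (n + 1) + 1 / (n + 1) := add_lt_add h1 h2
      _ = 2 / (n + 1) := by ring
  have hle : dist (f b) (f a) ≤ 0 := by
    have ht : Tendsto (fun n : ℕ => 2 / ((n : ℝ) + 1)) atTop (𝓝 0) := by
      have := tendsto_one_div_add_atTop_nhds_zero_nat.const_mul (2 : ℝ)
      simpa [div_eq_mul_inv, mul_comm] using this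
    exact ge_of_tendsto ht (Filter.Eventually.of_forall fun n => (key n).le)
  have h0 : dist (f b) (f a) = 0 := le_antisymm hle dist_nonneg
  exact dist_eq_zero.mp h0

end Aux

/-- a topological manifold (Hausdorff, locally homeomorphic to open
subsets of `ℝ^d`) containing a topological copy of `ω₁` is not contractible. -/
theorem not_contractible_of_embeds_omega1 (M : Type*) [TopologicalSpace M] [T2Space M]
    (d : ℕ)
    (hman : ∀ x : M, ∃ U : Set M, x ∈ U ∧ IsOpen U ∧
      ∃ V : Set (Fin d → ℝ), IsOpen V ∧ Nonempty (U ≃ₜ V))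
    (e : CountableOrdinals → M) (he : Topology.IsEmbedding e) :
    ¬ ContractibleSpace M := by
  classical
  open Filter Topology in
  intro hc
  obtain ⟨p, ⟨H⟩⟩ := id_nullhomotopic M
  -- `T` is the set of times at which the homotopy is eventually constant along the copy of ω₁
  set T : Set unitInterval :=
    {t | ∃ a : CountableOrdinals, ∃ q : M, ∀ b, a ≤ b → H (t, e b) = q} with hTdef
  have one_mem : (1 : unitInterval) ∈ T := by
    refine ⟨⟨0, omega1_pos⟩, p, fun b _ => ?_⟩
    simp [H.apply_one (e b)]
  have zero_not : (0 : unitInterval) ∉ T := by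
    rintro ⟨a, q, hq⟩
    have h1 := hq a le_rfl
    have h2 := hq (csucc a) (lt_csucc a).le
    rw [H.apply_zero] at h1 h2
    simp only [ContinuousMap.id_apply] at h1 h2
    exact (lt_csucc a).ne (he.injective (h1.trans h2.symm))
  have hTclosed : IsClosed T := by
    refine isClosed_of_closure_subset ?_
    intro t ht
    obtain ⟨u, hu, hut⟩ := mem_closure_iff_seq_limit.mp ht
    choose a q hq using hu
    obtain ⟨c, _, hcub⟩ := exists_isLUB_of_seq a
    refine ⟨c, H (t, e c), fun b hb => ?_⟩
    have l1 : Filter.Tendsto (fun n => H (u n, e b)) Filter.atTop (𝓝 (H (t, e b))) :=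
      (H.continuous.tendsto _).comp (hut.prodMk_nhds tendsto_const_nhds)
    have l2 : Filter.Tendsto (fun n => H (u n, e c)) Filter.atTop (𝓝 (H (t, e c))) :=
      (H.continuous.tendsto _).comp (hut.prodMk_nhds tendsto_const_nhds)
    have eqn : (fun n => H (u n, e b)) = fun n => H (u n, e c) := by
      funext n
      rw [hq n b (le_trans (hcub n) hb), hq n c (hcub n)]
    rw [eqn] at l1
    exact tendsto_nhds_unique l1 l2
  have hTopen : IsOpen T := by
    rw [Metric.isOpen_iff]
    rintro t ⟨a0, q, hq⟩
    obtain ⟨U, hqU, hUopen, V, hVopen, ⟨ψ⟩⟩ := hman q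
    set v : Fin d → ℝ := (ψ ⟨q, hqU⟩).1 with hv
    obtain ⟨r, hr, hball⟩ := Metric.isOpen_iff.mp hVopen v (ψ ⟨q, hqU⟩).2
    set W : Set M := Subtype.val ''
      (⇑ψ ⁻¹' {y : V | (y : Fin d → ℝ) ∈ Metric.ball v (r / 2)}) with hWdef
    have hWopen : IsOpen W := by
      apply hUopen.isOpenMap_subtype_val
      exact (Metric.isOpen_ball.preimage continuous_subtype_val).preimage ψ.continuous
    have hqW : q ∈ W := by
      refine ⟨⟨q, hqU⟩, ?_, rfl⟩
      show (ψ ⟨q, hqU⟩ : Fin d → ℝ) ∈ Metric.ball v (r / 2)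
      rw [← hv]
      exact Metric.mem_ball_self (by positivity)
    have hsub : Metric.closedBall v (r / 2) ⊆ V := by
      intro x hx
      apply hball
      rw [Metric.mem_ball]
      rw [Metric.mem_closedBall] at hx
      linarith
    set K : Set M :=
      Set.range (fun x : Metric.closedBall v (r / 2) => ((ψ.symm ⟨x.1, hsub x.2⟩ : U) : M))
      with hKdef
    have hKU : K ⊆ U := by
      rintro _ ⟨x, rfl⟩
      exact (ψ.symm ⟨x.1, hsub x.2⟩).2
    have hWK : W ⊆ K := by
      rintro _ ⟨u, hu, rfl⟩
      have hu' : (ψ u : Fin d → ℝ) ∈ Metric.closedBall v (r / 2) :=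
        Metric.ball_subset_closedBall hu
      refine ⟨⟨(ψ u : Fin d → ℝ), hu'⟩, ?_⟩
      have h6 : (⟨((ψ u : V) : Fin d → ℝ), hsub hu'⟩ : V) = ψ u := Subtype.ext rfl
      exact congrArg Subtype.val (by rw [h6]; exact ψ.symm_apply_apply u)
    have claim : ∃ n : ℕ, ∃ a : CountableOrdinals, ∀ b, a ≤ b → ∀ s : unitInterval,
        dist s t < 1 / (n + 1) → H (s, e b) ∈ W := by
      by_contra hcon
      push_neg at hcon
      choose Fb hFb Fs hFs1 hFs2 using hcon
      let g : ℕ → CountableOrdinals := fun n => Nat.rec a0 (fun n x => csucc (Fb n x)) n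
      have hg0 : g 0 = a0 := rfl
      have hgs : ∀ n, g (n + 1) = csucc (Fb n (g n)) := fun n => rfl
      have hmono : Monotone g := monotone_nat_of_le_succ (fun n => by
        rw [hgs]; exact le_trans (hFb n (g n)) (lt_csucc _).le)
      obtain ⟨c, hc, hcub⟩ := exists_isLUB_of_seq g
      have hgc : Filter.Tendsto g Filter.atTop (𝓝 c) := tendsto_atTop_isLUB hmono hc
      have hFbc : Filter.Tendsto (fun n => Fb n (g n)) Filter.atTop (𝓝 c) := by
        refine tendsto_of_tendsto_of_tendsto_of_le_of_le hgc
          (hgc.comp (tendsto_add_atTop_nat 1)) (fun n => hFb n (g n)) (fun n => ?_)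
        show Fb n (g n) ≤ g (n + 1)
        rw [hgs]
        exact (lt_csucc _).le
      have hsc : Filter.Tendsto (fun n => Fs n (g n)) Filter.atTop (𝓝 t) := by
        rw [tendsto_iff_dist_tendsto_zero]
        refine squeeze_zero (fun n => dist_nonneg) (fun n => (hFs1 n (g n)).le) ?_
        exact tendsto_one_div_add_atTop_nhds_zero_nat
      have hHq : H (t, e c) = q := hq c (hg0 ▸ hcub 0)
      have htend : Filter.Tendsto (fun n => H (Fs n (g n), e (Fb n (g n)))) Filter.atTop
          (𝓝 (H (t, e c))) :=
        (H.continuous.tendsto _).comp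
          (hsc.prodMk_nhds ((he.continuous.tendsto _).comp hFbc))
      rw [hHq] at htend
      obtain ⟨n, hn⟩ := (htend.eventually (hWopen.eventually_mem hqW)).exists
      exact hFs2 n (g n) hn
    obtain ⟨n, a, hna⟩ := claim
    refine ⟨1 / (n + 1), by positivity, fun s hs => ?_⟩
    rw [Metric.mem_ball] at hs
    have hmem : ∀ c : CountableOrdinals, H (s, e (max c a)) ∈ U :=
      fun c => hKU (hWK (hna (max c a) (le_max_right c a) s hs))
    set f : CountableOrdinals → (Fin d → ℝ) :=
      fun c => (ψ ⟨H (s, e (max c a)), hmem c⟩ : Fin d → ℝ) with hfdef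
    have hfc : Continuous f := by
      apply continuous_subtype_val.comp
      apply ψ.continuous.comp
      apply Continuous.subtype_mk
      exact H.continuous.comp (continuous_const.prodMk
        (he.continuous.comp (continuous_id.max continuous_const)))
    obtain ⟨a1, ha1⟩ := eventuallyConstant f hfc
    refine ⟨max a1 a, H (s, e (max a1 a)), fun b hb => ?_⟩
    have h3 : f b = f (max a1 a) :=
      (ha1 b (le_trans (le_max_left a1 a) hb)).trans (ha1 (max a1 a) (le_max_left a1 a)).symm
    have h4 : (⟨H (s, e (max b a)), hmem b⟩ : U) =
        ⟨H (s, e (max (max a1 a) a)), hmem (max a1 a)⟩ :=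
      ψ.injective (Subtype.coe_injective h3)
    have h5 := congrArg Subtype.val h4
    simp only at h5
    have hba : max b a = b := max_eq_left (le_trans (le_max_right a1 a) hb)
    have hm : max (max a1 a) a = max a1 a := max_eq_left (le_max_right a1 a)
    rw [hba, hm] at h5
    exact h5
  rcases isClopen_iff.mp ⟨hTclosed, hTopen⟩ with h | h
  · rw [h] at one_mem
    exact one_mem
  · exact zero_not (h.symm ▸ Set.mem_univ _)
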